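/- Let A : ℝ → Matrix (Fin n) (Fin n) ℂ be continuous and Y : ℝ → Matrix (Fin n) (Fin n) ℂ differentiable with Y'(x) = A(x)·Y(x) for all x. Then (det Y)'(x) = trace(A(x))·det Y(x), and consequently det Y(x) = det Y(x₀)·exp(∫_{x₀}^{x} trace(A(y)) dy). -/

import Mathlib

open Matrix intervalIntegral Finset

-- row expansion of det
lemma det_row_expand {n : ℕ} (M : Matrix (Fin n) (Fin n) ℂ) :
    M.det = ∑ σ : Equiv.Perm (Fin n), (Equiv.Perm.sign σ : ℂ) * ∏ i, M i (σ i) := by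
  rw [← Matrix.det_transpose, Matrix.det_apply']
  simp [Matrix.transpose_apply]

lemma det_deriv_step {n : ℕ} (A Y : ℝ → Matrix (Fin n) (Fin n) ℂ)
    (hY : ∀ x i j, HasDerivAt (fun x' => Y x' i j) ((A x * Y x) i j) x) (x : ℝ) :
    HasDerivAt (fun x' => (Y x').det)
      (∑ i, (Matrix.updateRow (Y x) i (fun j => (A x * Y x) i j)).det) x := by
  have key : ∀ σ : Equiv.Perm (Fin n),
      HasDerivAt (fun x' => ∏ i, Y x' i (σ i))
        (∑ i, (∏ j ∈ Finset.univ.erase i, Y x j (σ j)) * (A x * Y x) i (σ i)) x := by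
    intro σ
    simpa [smul_eq_mul] using
      HasDerivAt.fun_finsetProd (u := Finset.univ) (f := fun i x' => Y x' i (σ i))
        (f' := fun i => (A x * Y x) i (σ i)) (fun i _ => hY x i (σ i))
  have hsum : HasDerivAt (fun x' => ∑ σ : Equiv.Perm (Fin n),
      (Equiv.Perm.sign σ : ℂ) * ∏ i, Y x' i (σ i))
      (∑ σ : Equiv.Perm (Fin n), (Equiv.Perm.sign σ : ℂ) *
        ∑ i, (∏ j ∈ Finset.univ.erase i, Y x j (σ j)) * (A x * Y x) i (σ i)) x :=
    HasDerivAt.fun_sum (fun σ _ => (key σ).const_mul _)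
  have heq : (fun x' => (Y x').det) = (fun x' => ∑ σ : Equiv.Perm (Fin n),
      (Equiv.Perm.sign σ : ℂ) * ∏ i, Y x' i (σ i)) := by
    funext x'; exact det_row_expand _
  rw [heq]
  convert hsum using 1
  simp_rw [Finset.mul_sum]
  rw [Finset.sum_comm]
  apply Finset.sum_congr rfl
  intro i _
  rw [det_row_expand]
  apply Finset.sum_congr rfl
  intro σ _
  congr 1
  have : ∏ j, (Matrix.updateRow (Y x) i (fun j => (A x * Y x) i j)) j (σ j)
      = ((A x * Y x) i (σ i)) * ∏ j ∈ Finset.univ.erase i,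
        (Matrix.updateRow (Y x) i (fun j => (A x * Y x) i j)) j (σ j) := by
    rw [← Finset.mul_prod_erase _ _ (Finset.mem_univ i), Matrix.updateRow_self]
  rw [this, mul_comm]
  congr 1
  apply Finset.prod_congr rfl
  intro j hj
  rw [Matrix.updateRow_ne (Finset.ne_of_mem_erase hj)]

lemma sum_det_updateRow {n : ℕ} (A Y : Matrix (Fin n) (Fin n) ℂ) :
    ∑ i, (Matrix.updateRow Y i (fun j => (A * Y) i j)).det = A.trace * Y.det := by
  have h : ∀ i : Fin n, (fun j => (A * Y) i j) = ∑ k, A i k • Y k := by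
    intro i; funext j
    simp [Matrix.mul_apply, Finset.sum_apply]
  calc ∑ i, (Matrix.updateRow Y i (fun j => (A * Y) i j)).det
      = ∑ i, A i i • Y.det := by
        apply Finset.sum_congr rfl; intro i _
        rw [h i, Matrix.det_updateRow_sum]
    _ = A.trace * Y.det := by
        simp [Matrix.trace, Matrix.diag, Finset.sum_mul, smul_eq_mul]

theorem stmt_5 (n : ℕ) (A Y : ℝ → Matrix (Fin n) (Fin n) ℂ)
    (hA : ∀ i j, Continuous fun x => A x i j)
    (hY : ∀ x i j, HasDerivAt (fun x' => Y x' i j) ((A x * Y x) i j) x) :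
    (∀ x, HasDerivAt (fun x' => (Y x').det) ((A x).trace * (Y x).det) x) ∧
    (∀ x₀ x : ℝ, (Y x).det =
      (Y x₀).det * Complex.exp (∫ y in x₀..x, (A y).trace)) := by
  have part1 : ∀ x, HasDerivAt (fun x' => (Y x').det) ((A x).trace * (Y x).det) x := by
    intro x
    have := det_deriv_step A Y hY x
    rwa [sum_det_updateRow] at this
  refine ⟨part1, ?_⟩
  intro x₀ x
  have htr : Continuous fun x => (A x).trace := by
    have : (fun x => (A x).trace) = fun x => ∑ i, A x i i := by
      funext x; simp [Matrix.trace, Matrix.diag]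
    rw [this]
    exact continuous_finset_sum _ fun i _ => hA i i
  set F : ℝ → ℂ := fun x => ∫ y in x₀..x, (A y).trace with hF
  have hFd : ∀ x, HasDerivAt F ((A x).trace) x := fun x =>
    (htr.integral_hasStrictDerivAt x₀ x).hasDerivAt
  set g : ℝ → ℂ := fun x => (Y x).det * Complex.exp (-F x) with hg
  have hgd : ∀ x, HasDerivAt g 0 x := by
    intro x
    have h1 : HasDerivAt g ((A x).trace * (Y x).det * Complex.exp (-F x) +
        (Y x).det * (Complex.exp (-F x) * -(A x).trace)) x := (part1 x).mul ((hFd x).neg.cexp)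
    convert h1 using 1
    ring
  have hconst : ∀ y, g y = g x₀ := by
    intro y
    apply is_const_of_deriv_eq_zero (fun z => (hgd z).differentiableAt)
      (fun z => (hgd z).deriv)
  have h0 : g x₀ = (Y x₀).det := by
    simp [hg, hF, intervalIntegral.integral_same]
  have hx := (hconst x).trans h0
  have : (Y x).det * Complex.exp (-F x) * Complex.exp (F x)
      = (Y x₀).det * Complex.exp (F x) := by
    show g x * Complex.exp (F x) = _
    rw [hx]
  rwa [mul_assoc, ← Complex.exp_add, neg_add_cancel, Complex.exp_zero, mul_one] at this
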